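/- Let G be a group, A a trivial G-module, and n ≥ 1. For every (n−1)-cochain α: G^{n−1} → A and every commuting n-tuple 𝐠 = (g_1,…,g_n) ∈ X_n(G), the Dijkgraaf–Witten weight of the coboundary δα vanishes: Σ_{σ ∈ S_n} sgn(σ)·(δα)(g_{σ(1)},…,g_{σ(n)}) = 0. Consequently, for an n-cocycle ω, the value W_ω(𝐠) depends only on the cohomology class [ω] ∈ H^n(G,A). -/

import Mathlib

namespace DT

variable {G : Type*} [Group G] {A : Type*} [AddCommGroup A]

/-- Merge positions `i` and `i+1` of an `(n+1)`-tuple (bar-complex face map):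
for `j < i` entry `g j`, at `j = i` entry `g i * g (i+1)`, for `j > i` entry `g (j+1)`. -/
def barMerge {n : ℕ} (g : Fin (n+1) → G) (i : Fin n) : Fin n → G :=
  fun j => if (j : ℕ) < (i : ℕ) then g j.castSucc
    else if (j : ℕ) = (i : ℕ) then g j.castSucc * g j.succ
    else g j.succ

/-- The inhomogeneous (bar) coboundary of an `n`-cochain with values in a trivial module:
`(δω)(g_1,…,g_{n+1}) = ω(g_2,…,g_{n+1}) + Σ_{i=1}^{n} (−1)^i ω(g_1,…,g_i g_{i+1},…,g_{n+1})
 + (−1)^{n+1} ω(g_1,…,g_n)`. -/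
def coboundary {n : ℕ} (ω : (Fin n → G) → A) : (Fin (n+1) → G) → A :=
  fun g => ω (fun j => g j.succ)
    + ∑ i : Fin n, ((-1 : ℤ) ^ ((i : ℕ) + 1)) • ω (barMerge g i)
    + ((-1 : ℤ) ^ (n+1)) • ω (fun j => g j.castSucc)

/-- An `n`-cocycle. -/
def IsCocycle {n : ℕ} (ω : (Fin n → G) → A) : Prop := coboundary ω = 0

/-- An `(n+1)`-coboundary. -/
def IsCoboundary {n : ℕ} (ω : (Fin (n+1) → G) → A) : Prop := ∃ α, ω = coboundary α

/-- A commuting tuple. -/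
def IsCommTuple {n : ℕ} (g : Fin n → G) : Prop := ∀ i j, g i * g j = g j * g i

/-- The Dijkgraaf–Witten weight `W_ω(𝐠) = Σ_{σ ∈ S_n} sgn(σ) • ω(g_{σ(1)},…,g_{σ(n)})`. -/
def dwWeight {n : ℕ} (ω : (Fin n → G) → A) (g : Fin n → G) : A :=
  ∑ σ : Equiv.Perm (Fin n), ((Equiv.Perm.sign σ : ℤ)) • ω (g ∘ σ)

end DT

open DT

section Aux
variable {G : Type*} [Group G] {A : Type*} [AddCommGroup A]

lemma DT.barMerge_comm {m : ℕ} (g : Fin (m+1) → G) (hg : IsCommTuple g)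
    (σ : Equiv.Perm (Fin (m+1))) (i : Fin m) :
    barMerge (g ∘ (σ * Equiv.swap i.castSucc i.succ)) i = barMerge (g ∘ σ) i := by
  have hne : (i.castSucc : Fin (m+1)) ≠ i.succ := by
    simp [Fin.ext_iff]
  funext j
  simp only [barMerge, Function.comp_apply, Equiv.Perm.mul_apply]
  rcases lt_trichotomy (j : ℕ) (i : ℕ) with h | h | h
  · have h1 : (j.castSucc : Fin (m+1)) ≠ i.castSucc := by
      simp [Fin.ext_iff]; omega
    have h2 : (j.castSucc : Fin (m+1)) ≠ i.succ := by
      simp [Fin.ext_iff]; omega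
    simp [h, Equiv.swap_apply_of_ne_of_ne h1 h2]
  · have hj : j = i := Fin.ext h
    subst hj
    simp [h, Equiv.swap_apply_left, Equiv.swap_apply_right, hg (σ j.succ) (σ j.castSucc)]
  · have h1 : (j.succ : Fin (m+1)) ≠ i.castSucc := by
      simp [Fin.ext_iff]; omega
    have h2 : (j.succ : Fin (m+1)) ≠ i.succ := by
      simp [Fin.ext_iff]; omega
    simp [h, Nat.lt_asymm h, Nat.ne_of_gt h, Equiv.swap_apply_of_ne_of_ne h1 h2]

lemma DT.dwWeight_coboundary {m : ℕ} (α : (Fin m → G) → A) (g : Fin (m+1) → G)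
    (hg : IsCommTuple g) : dwWeight (coboundary α) g = 0 := by
    unfold dwWeight coboundary
    simp only [smul_add, Finset.sum_add_distrib]
    have hmid : ∑ σ : Equiv.Perm (Fin (m+1)), (Equiv.Perm.sign σ : ℤ) •
        ∑ i : Fin m, ((-1 : ℤ) ^ ((i : ℕ) + 1)) • α (barMerge (g ∘ σ) i) = 0 := by
      simp only [Finset.smul_sum]
      rw [Finset.sum_comm]
      refine Finset.sum_eq_zero fun i _ => ?_
      set τ : Equiv.Perm (Fin (m+1)) := Equiv.swap i.castSucc i.succ with hτ
      have hne : (i.castSucc : Fin (m+1)) ≠ i.succ := by simp [Fin.ext_iff]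
      refine Finset.sum_ninvolution (fun σ => σ * τ) ?_ ?_ (fun _ => Finset.mem_univ _) ?_
      · intro σ
        show _ + (Equiv.Perm.sign (σ * τ) : ℤ) • _ = (0:A)
        rw [barMerge_comm g hg σ i]
        have hs : (Equiv.Perm.sign (σ * τ) : ℤ) = -(Equiv.Perm.sign σ : ℤ) := by
          simp [hτ, Equiv.Perm.sign_swap hne]
        rw [hs, smul_smul, smul_smul]
        rw [neg_mul, neg_smul, add_neg_cancel]
      · intro σ _ h
        have hτ1 : τ = 1 := mul_left_cancel (a := σ) (by rw [mul_one]; exact h)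
        exact hne (Equiv.swap_eq_one_iff.mp (hτ.symm.trans hτ1))
      · intro σ
        show σ * τ * τ = σ
        rw [mul_assoc, hτ, Equiv.swap_mul_self, mul_one]
    rw [hmid, add_zero]
    -- first and last sums cancel
    have hrot : ∀ j : Fin m, (finRotate (m+1))⁻¹ j.succ = j.castSucc := by
      intro j
      rw [Equiv.Perm.inv_eq_iff_eq, finRotate_succ_apply, Fin.coeSucc_eq_succ]
    have h1 : ∑ σ : Equiv.Perm (Fin (m+1)), (Equiv.Perm.sign σ : ℤ) •
        α (fun j => (g ∘ σ) j.succ)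
        = ∑ σ : Equiv.Perm (Fin (m+1)), ((-1:ℤ)^m * (Equiv.Perm.sign σ : ℤ)) •
        α (fun j => (g ∘ σ) j.castSucc) := by
      rw [← Equiv.sum_comp (Equiv.mulRight (finRotate (m+1))⁻¹)
        (fun σ => (Equiv.Perm.sign σ : ℤ) • α (fun j => (g ∘ σ) j.succ))]
      refine Finset.sum_congr rfl fun σ _ => ?_
      have hs : (Equiv.Perm.sign (σ * (finRotate (m+1))⁻¹) : ℤ)
          = (-1)^m * (Equiv.Perm.sign σ : ℤ) := by
        simp [sign_finRotate, mul_comm]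
      have harg : (fun j : Fin m => (g ∘ ⇑(σ * (finRotate (m+1))⁻¹)) j.succ)
          = fun j : Fin m => (g ∘ ⇑σ) j.castSucc := by
        funext j
        simp only [Function.comp_apply, Equiv.Perm.mul_apply, hrot j]
      simp only [Equiv.coe_mulRight]
      rw [harg, hs]
    rw [h1, ← Finset.sum_add_distrib]
    refine Finset.sum_eq_zero fun σ _ => ?_
    rw [smul_smul, ← add_smul]
    have : (-1:ℤ)^m * (Equiv.Perm.sign σ : ℤ) + (Equiv.Perm.sign σ : ℤ) * (-1:ℤ)^(m+1) = 0 := by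
      rw [pow_succ]; ring
    rw [this, zero_smul]

end Aux

open DT in
theorem stmt0 {G : Type*} [Group G] {A : Type*} [AddCommGroup A] (m : ℕ)
    (α : (Fin m → G) → A) (g : Fin (m+1) → G) (hg : IsCommTuple g) :
    dwWeight (coboundary α) g = 0 ∧
    ∀ ω ω' : (Fin (m+1) → G) → A, IsCocycle ω → IsCocycle ω' →
      (∃ β : (Fin m → G) → A, ω' = ω + coboundary β) →
      dwWeight ω' g = dwWeight ω g := by
  refine ⟨dwWeight_coboundary α g hg, ?_⟩
  rintro ω ω' _ _ ⟨β, rfl⟩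
  have hadd : dwWeight (ω + coboundary β) g = dwWeight ω g + dwWeight (coboundary β) g := by
    unfold dwWeight
    simp [smul_add, Finset.sum_add_distrib]
  rw [hadd, dwWeight_coboundary β g hg, add_zero]
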